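/- Let n = 2m and let H_α be the Hermitian adjacency matrix of an oriented n-cycle whose edge weights e^{iα(j)} satisfy Σ_j α(j) = π. Then the characteristic polynomial of H_α equals (2·T_m(x/2))^2, where T_m is the m-th Chebyshev polynomial of the first kind. -/

import Mathlib

open Polynomial

/-- The Hermitian adjacency matrix of an oriented `n`-cycle: the arc from `j` to `j+1`
(modulo `n`) receives weight `exp(i α j)`, and the reverse arc its conjugate. -/
noncomputable def cycleH (n : ℕ) (α : Fin n → ℝ) : Matrix (Fin n) (Fin n) ℂ :=
  fun j k =>
    (if (k : ℕ) = ((j : ℕ) + 1) % n then Complex.exp (Complex.I * (α j)) else 0) +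
    (if (j : ℕ) = ((k : ℕ) + 1) % n then Complex.exp (-(Complex.I * (α k))) else 0)

namespace CycleAux

open Matrix
open scoped Fin.CommRing Fin.NatCast

/-- The weighted cyclic shift. -/
noncomputable def S (n : ℕ) [NeZero n] (α : Fin n → ℝ) : Matrix (Fin n) (Fin n) ℂ :=
  fun j k => if k = j + 1 then Complex.exp (Complex.I * (α j)) else 0

variable {n : ℕ} [NeZero n]

lemma one_ne_zero' (hn : 2 ≤ n) : (1 : Fin n) ≠ 0 := by
  rw [Ne, Fin.one_eq_zero_iff]
  omega

lemma cond_iff (hn : 2 ≤ n) (j k : Fin n) :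
    ((k : ℕ) = ((j : ℕ) + 1) % n) ↔ k = j + 1 := by
  rw [Fin.ext_iff, Fin.add_def, Fin.val_one', Nat.mod_eq_of_lt (by omega : 1 < n)]

lemma cycleH_eq (hn : 2 ≤ n) (α : Fin n → ℝ) :
    cycleH n α = S n α + (S n α)ᴴ := by
  funext j k
  rw [cycleH, Matrix.add_apply]
  have h1 : (if (k : ℕ) = ((j : ℕ) + 1) % n then Complex.exp (Complex.I * (α j)) else 0)
      = S n α j k := by
    unfold S
    exact if_congr (cond_iff hn j k) rfl rfl
  have h2 : (if (j : ℕ) = ((k : ℕ) + 1) % n then Complex.exp (-(Complex.I * (α k))) else 0)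
      = (S n α)ᴴ j k := by
    rw [Matrix.conjTranspose_apply]
    unfold S
    rw [apply_ite (star : ℂ → ℂ), star_zero]
    refine if_congr (cond_iff hn k j) ?_ rfl
    rw [show (star : ℂ → ℂ) = (starRingEnd ℂ) from rfl, ← Complex.exp_conj]
    congr 1
    simp [Complex.conj_ofReal]
  rw [h1, h2]

lemma S_mul_self (hn : 2 ≤ n) (α : Fin n → ℝ) : (S n α)ᴴ * S n α = 1 := by
  funext j k
  rw [Matrix.mul_apply]
  rw [Finset.sum_eq_single (j - 1)]
  · rw [Matrix.conjTranspose_apply]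
    have hj : j - 1 + 1 = j := by ring
    unfold S
    rw [if_pos hj.symm, hj, Matrix.one_apply]
    have hstar : star (Complex.exp (Complex.I * ((α (j - 1) : ℝ) : ℂ)))
        = Complex.exp (-(Complex.I * ((α (j - 1) : ℝ) : ℂ))) := by
      show (starRingEnd ℂ) _ = _
      rw [← Complex.exp_conj]
      congr 1
      simp only [_root_.map_mul, Complex.conj_I, Complex.conj_ofReal]
      ring
    by_cases hk : k = j
    · subst hk
      rw [if_pos rfl, if_pos rfl, hstar, ← Complex.exp_add, neg_add_cancel, Complex.exp_zero]
    · rw [if_neg hk, mul_zero, if_neg (Ne.symm hk)]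
  · intro l _ hl
    have : j ≠ l + 1 := by
      intro h
      apply hl
      rw [h]; ring
    rw [Matrix.conjTranspose_apply]
    unfold S
    rw [if_neg (fun h => this h), star_zero, zero_mul]
  · intro h; exact absurd (Finset.mem_univ _) h

/-- classification of contributing permutations -/
lemma perm_eq (hn : 2 ≤ n) (σ : Equiv.Perm (Fin n))
    (hσ : ∀ i, σ i = i ∨ σ i = i - 1) :
    σ = 1 ∨ σ = Equiv.subRight (1 : Fin n) := by
  by_cases h1 : σ = 1
  · exact Or.inl h1
  right
  obtain ⟨i₀, hi₀⟩ : ∃ i, σ i ≠ i := by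
    by_contra h
    push_neg at h
    exact h1 (Equiv.ext h)
  have key : ∀ k : ℕ, σ (i₀ - (k : Fin n)) = i₀ - (k : Fin n) - 1 := by
    intro k
    induction k with
    | zero => simpa using (hσ i₀).resolve_left hi₀
    | succ k ih =>
      have hcast : ((k + 1 : ℕ) : Fin n) = (k : Fin n) + 1 := by push_cast; ring
      rw [hcast, ← sub_sub]
      rcases hσ (i₀ - (k : Fin n) - 1) with h | h
      · exfalso
        have h2 := (σ.injective (ih.trans h.symm)).symm
        rw [sub_eq_self] at h2
        exact one_ne_zero' hn h2
      · exact h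
  apply Equiv.ext
  intro i
  have := key ((i₀ - i : Fin n) : ℕ)
  rw [Fin.cast_val_eq_self, sub_sub_cancel] at this
  rw [this, Equiv.subRight_apply]

lemma sign_subRight (hn : 2 ≤ n) (he : Even n) :
    Equiv.Perm.sign (Equiv.subRight (1 : Fin n) : Equiv.Perm (Fin n)) = -1 := by
  obtain ⟨k, rfl⟩ : ∃ k, n = k + 1 := ⟨n - 1, by omega⟩
  have h : (Equiv.subRight (1 : Fin (k + 1)) : Equiv.Perm (Fin (k + 1)))⁻¹
      = finRotate (k + 1) := by
    apply Equiv.ext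
    intro i
    rw [finRotate_succ_apply]
    show (Equiv.subRight (1 : Fin (k + 1))).symm i = i + 1
    rw [Equiv.subRight_symm_apply]
  have := Equiv.Perm.sign_inv (Equiv.subRight (1 : Fin (k + 1)) : Equiv.Perm (Fin (k + 1)))
  rw [h, sign_finRotate] at this
  rw [← this]
  have hk : Odd k := by
    rcases he with ⟨t, ht⟩
    exact ⟨t - 1, by omega⟩
  rw [Nat.add_sub_cancel, hk.neg_one_pow]

lemma charpoly_S (hn : 2 ≤ n) (he : Even n) (α : Fin n → ℝ) (hα : ∑ j, α j = Real.pi) :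
    (S n α).charpoly = X ^ n + 1 := by
  classical
  set rot : Equiv.Perm (Fin n) := Equiv.subRight (1 : Fin n) with hrot
  rw [Matrix.charpoly, Matrix.det_apply]
  have hsub : ({1, rot} : Finset (Equiv.Perm (Fin n))) ⊆ Finset.univ := Finset.subset_univ _
  rw [← Finset.sum_subset hsub]
  · have hne : (1 : Equiv.Perm (Fin n)) ≠ rot := by
      intro h
      have := congrArg (fun σ : Equiv.Perm (Fin n) => σ 0) h
      simp only [Equiv.Perm.one_apply, hrot, Equiv.subRight_apply, zero_sub] at this
      exact one_ne_zero' hn (by rw [← neg_eq_zero, ← this])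
    rw [Finset.sum_pair hne]
    have hterm1 : ∀ i : Fin n, (Matrix.charmatrix (S n α)) ((1 : Equiv.Perm (Fin n)) i) i
        = (X : ℂ[X]) := by
      intro i
      rw [Equiv.Perm.one_apply, Matrix.charmatrix_apply_eq]
      have : S n α i i = 0 := by
        unfold S
        rw [if_neg]
        intro h
        exact one_ne_zero' hn (by rwa [left_eq_add] at h)
      rw [this, map_zero, sub_zero]
    have hterm2 : ∀ i : Fin n, (Matrix.charmatrix (S n α)) (rot i) i
        = -Polynomial.C (Complex.exp (Complex.I * (α (i - 1)))) := by
      intro i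
      have hri : rot i = i - 1 := Equiv.subRight_apply _ _
      have hne' : rot i ≠ i := by
        rw [hri]
        intro h
        rw [sub_eq_self] at h
        exact one_ne_zero' hn h
      rw [Matrix.charmatrix_apply_ne _ _ _ hne', hri]
      congr 1
      unfold S
      rw [if_pos]
      ring
    rw [Finset.prod_congr rfl (fun i _ => hterm1 i), Finset.prod_congr rfl (fun i _ => hterm2 i)]
    rw [Finset.prod_const, Finset.card_univ, Fintype.card_fin]
    have hprod : (∏ i : Fin n, -Polynomial.C (Complex.exp (Complex.I * ((α (i - 1) : ℝ) : ℂ))))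
        = -1 := by
      have h1 : (∏ i : Fin n, -Polynomial.C (Complex.exp (Complex.I * ((α (i - 1) : ℝ) : ℂ))))
          = ((-1 : ℂ[X]) ^ n) * ∏ i : Fin n,
              Polynomial.C (Complex.exp (Complex.I * ((α (i - 1) : ℝ) : ℂ))) := by
        rw [Finset.prod_congr rfl (fun i _ => (neg_one_mul
          (Polynomial.C (Complex.exp (Complex.I * ((α (i - 1) : ℝ) : ℂ))))).symm),
          Finset.prod_mul_distrib, Finset.prod_const, Finset.card_univ, Fintype.card_fin]
      rw [h1, Even.neg_one_pow he, one_mul, ← map_prod]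
      have h2 : (∏ i : Fin n, Complex.exp (Complex.I * ((α i : ℝ) : ℂ)))
          = ∏ i : Fin n, Complex.exp (Complex.I * ((α (i - 1) : ℝ) : ℂ)) :=
        Fintype.prod_equiv (Equiv.addRight (1 : Fin n)) _ _ (fun i => by
          rw [Equiv.coe_addRight, add_sub_cancel_right])
      rw [← h2, ← Complex.exp_sum]
      have h3 : (∑ i : Fin n, Complex.I * ((α i : ℝ) : ℂ)) = (Real.pi : ℂ) * Complex.I := by
        rw [← Finset.mul_sum, ← Complex.ofReal_sum, hα]
        ring
      rw [h3, Complex.exp_pi_mul_I]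
      simp
    rw [hprod, Equiv.Perm.sign_one, sign_subRight hn he, one_smul]
    simp
  · intro σ _ hσ
    have hcontr : ¬ (∀ i, σ i = i ∨ σ i = i - 1) := by
      intro hall
      rcases perm_eq hn σ hall with h | h
      · exact hσ (by simp [h])
      · exact hσ (by simp [h, hrot])
    push_neg at hcontr
    obtain ⟨i, hi1, hi2⟩ := hcontr
    have hzero : (Matrix.charmatrix (S n α)) (σ i) i = 0 := by
      rw [Matrix.charmatrix_apply_ne _ _ _ hi1]
      have : S n α (σ i) i = 0 := by
        unfold S
        rw [if_neg]
        intro h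
        exact hi2 (eq_sub_of_add_eq h.symm)
      rw [this, map_zero, neg_zero]
    rw [Finset.prod_eq_zero (i := i) (f := fun l => Matrix.charmatrix (S n α) (σ l) l)
      (Finset.mem_univ i) hzero, smul_zero]

/-- evaluation of the characteristic polynomial -/
lemma eval_charpoly' (M : Matrix (Fin n) (Fin n) ℂ) (x : ℂ) :
    M.charpoly.eval x = (x • (1 : Matrix (Fin n) (Fin n) ℂ) - M).det := by
  rw [Matrix.charpoly, ← Polynomial.coe_evalRingHom, RingHom.map_det]
  congr 1
  funext i j
  rw [RingHom.mapMatrix_apply, Matrix.map_apply]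
  by_cases h : i = j
  · subst h
    simp [Matrix.charmatrix_apply_eq, Matrix.one_apply_eq, Matrix.sub_apply, Matrix.smul_apply]
  · simp [Matrix.charmatrix_apply_ne _ _ _ h, Matrix.one_apply_ne h, h, Matrix.sub_apply,
      Matrix.smul_apply]

lemma cheb_eval (z : ℂ) (hz : z ≠ 0) (k : ℕ) :
    (Polynomial.Chebyshev.T ℂ (k : ℤ)).eval ((z + z⁻¹) / 2) * 2 = z ^ k + z⁻¹ ^ k := by
  induction k using Nat.twoStepInduction with
  | zero =>
    simp [Polynomial.Chebyshev.T_zero]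
    norm_num
  | one => simp [Polynomial.Chebyshev.T_one]
  | more k ih0 ih1 =>
    have hcast : ((k + 2 : ℕ) : ℤ) = (k : ℤ) + 2 := by push_cast; ring
    have hcast1 : ((k + 1 : ℕ) : ℤ) = (k : ℤ) + 1 := by push_cast; ring
    rw [hcast, Polynomial.Chebyshev.T_add_two]
    rw [hcast1] at ih1
    have hzz : z * z⁻¹ = 1 := mul_inv_cancel₀ hz
    simp only [Polynomial.eval_sub, Polynomial.eval_mul, Polynomial.eval_ofNat,
      Polynomial.eval_X]
    linear_combination (z + z⁻¹) * ih1 - ih0 + (z ^ k + z⁻¹ ^ k) * hzz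
end CycleAux

open Matrix

/-- If the weights of an oriented even cycle `C_{2m}` satisfy `∑ α j = π`, then the
characteristic polynomial of its Hermitian adjacency matrix equals `(2 T_m(x/2))²`,
where `T_m` is the Chebyshev polynomial of the first kind. -/
theorem charpoly_oriented_even_cycle_chebyshev (m : ℕ) (hm : 2 ≤ m)
    (α : Fin (2 * m) → ℝ) (hα : ∑ j, α j = Real.pi) :
    (cycleH (2 * m) α).charpoly =
      ((2 : ℂ[X]) * (Polynomial.Chebyshev.T ℂ (m : ℤ)).comp
        (Polynomial.C (2⁻¹ : ℂ) * Polynomial.X)) ^ 2 := by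
  haveI : NeZero (2 * m) := ⟨by omega⟩
  have hn2 : 2 ≤ 2 * m := by omega
  have he : Even (2 * m) := ⟨m, by omega⟩
  have hSH := CycleAux.cycleH_eq hn2 α
  have hunit := CycleAux.S_mul_self hn2 α
  have hchar := CycleAux.charpoly_S hn2 he α hα
  set S := CycleAux.S (2 * m) α with hS
  have hdet : ∀ z : ℂ, (z • (1 : Matrix (Fin (2 * m)) (Fin (2 * m)) ℂ) - S).det
      = z ^ (2 * m) + 1 := by
    intro z
    rw [← CycleAux.eval_charpoly', hchar]
    simp
  have hdetS : S.det = 1 := by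
    have h0 := hdet 0
    rw [zero_smul, zero_sub, Matrix.det_neg, Fintype.card_fin, Even.neg_one_pow he, one_mul,
      zero_pow (by omega : 2 * m ≠ 0), zero_add] at h0
    exact h0
  apply Polynomial.funext
  intro x
  have hdeg : (X ^ 2 - Polynomial.C x * X + 1 : ℂ[X]).degree = 2 := by
    compute_degree!
  obtain ⟨z, hzroot⟩ := IsAlgClosed.exists_root (k := ℂ) (X ^ 2 - Polynomial.C x * X + 1)
    (by rw [hdeg]; norm_num)
  have hz2 : z ^ 2 - x * z + 1 = 0 := by
    simpa using hzroot
  have hz : z ≠ 0 := by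
    intro h
    rw [h] at hz2
    simp at hz2
  have hzz : z * z⁻¹ = 1 := mul_inv_cancel₀ hz
  have hx : z + z⁻¹ = x := by
    field_simp
    linear_combination hz2
  have e1 : (x • 1 - (S + Sᴴ)) * S = x • S - S * S - 1 := by
    rw [sub_mul, add_mul, smul_mul_assoc, one_mul, hunit]
    abel
  have e2 : (S - z • 1) * (S - z⁻¹ • 1) = S * S - x • S + 1 := by
    have hzz' : z⁻¹ * z = 1 := inv_mul_cancel₀ hz
    simp only [sub_mul, mul_sub, smul_mul_assoc, mul_smul_comm, one_mul, mul_one, smul_smul,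
      smul_sub, hzz, hzz', one_smul]
    rw [← hx, add_smul]
    abel
  have eM : (x • 1 - (S + Sᴴ)) * S = -((S - z • 1) * (S - z⁻¹ • 1)) := by
    rw [e1, e2]
    abel
  have hdetM := congrArg Matrix.det eM
  rw [Matrix.det_mul, hdetS, mul_one, Matrix.det_neg, Fintype.card_fin, Even.neg_one_pow he,
    one_mul, Matrix.det_mul] at hdetM
  have hA : (S - z • 1).det = z ^ (2 * m) + 1 := by
    rw [← neg_sub (z • (1 : Matrix (Fin (2 * m)) (Fin (2 * m)) ℂ)) S, Matrix.det_neg,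
      Fintype.card_fin, Even.neg_one_pow he, one_mul, hdet]
  have hB : (S - z⁻¹ • 1).det = z⁻¹ ^ (2 * m) + 1 := by
    rw [← neg_sub (z⁻¹ • (1 : Matrix (Fin (2 * m)) (Fin (2 * m)) ℂ)) S, Matrix.det_neg,
      Fintype.card_fin, Even.neg_one_pow he, one_mul, hdet]
  rw [hSH, CycleAux.eval_charpoly', hdetM, hA, hB]
  have hT := CycleAux.cheb_eval z hz m
  have hx2 : (2⁻¹ : ℂ) * x = (z + z⁻¹) / 2 := by
    rw [← hx]
    ring
  simp only [Polynomial.eval_pow, Polynomial.eval_mul, Polynomial.eval_comp, Polynomial.eval_C,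
    Polynomial.eval_X, Polynomial.eval_ofNat, hx2]
  have hm1 : z ^ m * z⁻¹ ^ m = 1 := by
    rw [← mul_pow, hzz, one_pow]
  linear_combination (-(2 * (Polynomial.Chebyshev.T ℂ (m : ℤ)).eval ((z + z⁻¹) / 2)
    + z ^ m + z⁻¹ ^ m)) * hT + (z ^ m * z⁻¹ ^ m - 1) * hm1
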